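/- Consider a weakly reversible generalized chemical reaction network with stoichiometric subspace S = range(Y I_E) and kinetic-order subspace S̃ = range(Ỹ I_E). Suppose there exist nonzero vectors u ∈ S̃^⊥ and v ∈ S with sign(u_i) = sign(v_i) for all i = 1,…,n. Then there exist edge labels k ∈ ℝ^E_+ and a complex-balanced equilibrium x* ∈ Z_k such that J(x*) v = 0; in particular, J(x*) is not stable on S. -/
import Mathlib


open Matrix Polynomial Filter Topology

noncomputable section

/-- `D ∈ 𝒟₊`: a diagonal matrix with positive diagonal entries. -/
def IsPosDiag {n : ℕ} (D : Matrix (Fin n) (Fin n) ℝ) : Prop :=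
  ∃ d : Fin n → ℝ, (∀ i, 0 < d i) ∧ D = Matrix.diagonal d

/-- A real square matrix is stable if every root in `ℂ` of its characteristic
polynomial has negative real part. -/
def IsStableMat {n : ℕ} (A : Matrix (Fin n) (Fin n) ℝ) : Prop :=
  ∀ z : ℂ, (A.charpoly.map (algebraMap ℝ ℂ)).IsRoot z → z.re < 0

/-- A real square matrix is semistable if every root in `ℂ` of its characteristic
polynomial has non-positive real part. -/
def IsSemistableMat {n : ℕ} (A : Matrix (Fin n) (Fin n) ℝ) : Prop :=
  ∀ z : ℂ, (A.charpoly.map (algebraMap ℝ ℂ)).IsRoot z → z.re ≤ 0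

/-- The restriction `A|_S : S → S` of a matrix whose range is contained in `S`. -/
def restrictedMap {n : ℕ} (A : Matrix (Fin n) (Fin n) ℝ) (S : Submodule ℝ (Fin n → ℝ))
    (h : ∀ v, A.mulVec v ∈ S) : S →ₗ[ℝ] S :=
  A.mulVecLin.restrict (p := S) (q := S) (fun x _ => by simpa using h x)

/-- `A` is stable on `S`: `range A ⊆ S` and every eigenvalue over `ℂ` (root of the
characteristic polynomial) of `A|_S : S → S` has negative real part. -/
def IsStableOn {n : ℕ} (A : Matrix (Fin n) (Fin n) ℝ) (S : Submodule ℝ (Fin n → ℝ)) : Prop :=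
  ∃ h : ∀ v, A.mulVec v ∈ S,
    ∀ z : ℂ, (((restrictedMap A S h).charpoly).map (algebraMap ℝ ℂ)).IsRoot z → z.re < 0

/-- `A` is semistable on `S`: `range A ⊆ S` and every eigenvalue over `ℂ` of
`A|_S : S → S` has non-positive real part. -/
def IsSemistableOn {n : ℕ} (A : Matrix (Fin n) (Fin n) ℝ) (S : Submodule ℝ (Fin n → ℝ)) : Prop :=
  ∃ h : ∀ v, A.mulVec v ∈ S,
    ∀ z : ℂ, (((restrictedMap A S h).charpoly).map (algebraMap ℝ ℂ)).IsRoot z → z.re ≤ 0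

/-- `M < 0` on `S`. -/
def NegDefOn {n : ℕ} (M : Matrix (Fin n) (Fin n) ℝ) (S : Submodule ℝ (Fin n → ℝ)) : Prop :=
  ∀ x ∈ S, x ≠ 0 → x ⬝ᵥ M.mulVec x < 0

/-- `M ≤ 0` on `S`. -/
def NegSemidefOn {n : ℕ} (M : Matrix (Fin n) (Fin n) ℝ) (S : Submodule ℝ (Fin n → ℝ)) : Prop :=
  ∀ x ∈ S, x ⬝ᵥ M.mulVec x ≤ 0

/-- `M > 0` on `S`. -/
def PosDefOn {n : ℕ} (M : Matrix (Fin n) (Fin n) ℝ) (S : Submodule ℝ (Fin n → ℝ)) : Prop :=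
  ∀ x ∈ S, x ≠ 0 → 0 < x ⬝ᵥ M.mulVec x

/-- The Laplacian matrix `A_k` of the labeled digraph `(V,E)` with edge labels `k`:
`(A_k)_{i',i} = k_{i→i'}` if `(i→i') ∈ E`, `(A_k)_{i,i} = -∑_{(i→i')∈E} k_{i→i'}`,
and `0` otherwise (the graph has no self-loops). -/
def laplacian {m : ℕ} (E : Finset (Fin m × Fin m)) (k : Fin m × Fin m → ℝ) :
    Matrix (Fin m) (Fin m) ℝ :=
  fun i' i => (if (i, i') ∈ E then k (i, i') else 0)
    - (if i' = i then ∑ e ∈ E.filter (fun e => e.1 = i), k e else 0)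

/-- The incidence matrix `I_E ∈ ℝ^{V×E}`, with column `e_{i'} - e_i` for each edge `(i→i')`. -/
def incidence {m : ℕ} (E : Finset (Fin m × Fin m)) :
    Matrix (Fin m) {e : Fin m × Fin m // e ∈ E} ℝ :=
  fun i e => (if (e : Fin m × Fin m).2 = i then (1 : ℝ) else 0)
    - (if (e : Fin m × Fin m).1 = i then 1 else 0)

/-- `x^Ỹ ∈ ℝ^V`, defined by `(x^Ỹ)_j = ∏_i x_i ^ (Ỹ)_{ij}` (real exponents). -/
def powVec {n m : ℕ} (x : Fin n → ℝ) (Yt : Matrix (Fin n) (Fin m) ℝ) : Fin m → ℝ :=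
  fun j => ∏ i, (x i) ^ (Yt i j)

/-- The digraph `(V,E)` is weakly reversible: every connected component is strongly
connected, i.e. whenever `a` and `b` are connected by an undirected path, there is a
directed path from `a` to `b`. -/
def WeaklyReversible {m : ℕ} (E : Finset (Fin m × Fin m)) : Prop :=
  ∀ a b : Fin m,
    Relation.ReflTransGen (fun u v => (u, v) ∈ E ∨ (v, u) ∈ E) a b →
    Relation.ReflTransGen (fun u v => (u, v) ∈ E) a b

/-- The stoichiometric subspace `S = range (Y I_E)`. -/
def stoichSubspace {n m : ℕ} (Y : Matrix (Fin n) (Fin m) ℝ) (E : Finset (Fin m × Fin m)) :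
    Submodule ℝ (Fin n → ℝ) :=
  LinearMap.range (Y * incidence E).mulVecLin

/-- The Jacobian matrix `J(x) = Y A_k diag(x^Ỹ) Ỹᵀ diag(x⁻¹)` of `x ↦ Y A_k x^Ỹ`. -/
def jacobianMat {n m : ℕ} (E : Finset (Fin m × Fin m)) (k : Fin m × Fin m → ℝ)
    (Y Yt : Matrix (Fin n) (Fin m) ℝ) (x : Fin n → ℝ) : Matrix (Fin n) (Fin n) ℝ :=
  Y * laplacian E k * Matrix.diagonal (powVec x Yt) * Ytᵀ * Matrix.diagonal (fun i => (x i)⁻¹)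

/-- `C` is (the edge set of) a cycle: `{i_1→i_2, …, i_{r-1}→i_r, i_r→i_1}` with
pairwise distinct vertices `i_1, …, i_r` (and `r ≥ 2`). -/
def IsCycleEdges {m : ℕ} (C : Finset (Fin m × Fin m)) : Prop :=
  ∃ (r : ℕ) (f : Fin (r + 2) → Fin m), Function.Injective f ∧
    C = Finset.image (fun j => (f j, f (j + 1))) Finset.univ

/-- The edge set of the directed `m`-cycle `1 → 2 → ⋯ → m → 1`. -/
def cycleEdges (m : ℕ) [NeZero m] : Finset (Fin m × Fin m) :=
  Finset.image (fun i : Fin m => (i, i + 1)) Finset.univ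

end

section Aux

private lemma flow_exists {m : ℕ} (E : Finset (Fin m × Fin m)) {a b : Fin m}
    (h : Relation.ReflTransGen (fun u v => (u, v) ∈ E) a b) :
    ∃ w : Fin m × Fin m → ℕ, ∀ j,
      (∑ e ∈ E.filter (fun e => e.2 = j), w e) + (if a = j then 1 else 0)
        = (∑ e ∈ E.filter (fun e => e.1 = j), w e) + (if b = j then 1 else 0) := by
  induction h with
  | refl => exact ⟨0, fun j => by simp⟩
  | @tail b c hab hbc ih =>
      obtain ⟨w, hw⟩ := ih
      refine ⟨fun e => w e + if e = (b, c) then 1 else 0, fun j => ?_⟩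
      have h1 : ∑ e ∈ E.filter (fun e => e.2 = j), (w e + if e = (b, c) then 1 else 0)
          = (∑ e ∈ E.filter (fun e => e.2 = j), w e) + (if c = j then 1 else 0) := by
        rw [Finset.sum_add_distrib,
          Finset.sum_ite_eq' (E.filter (fun e => e.2 = j)) (b, c) (fun _ => 1)]
        simp [Finset.mem_filter, hbc]
      have h2 : ∑ e ∈ E.filter (fun e => e.1 = j), (w e + if e = (b, c) then 1 else 0)
          = (∑ e ∈ E.filter (fun e => e.1 = j), w e) + (if b = j then 1 else 0) := by
        rw [Finset.sum_add_distrib,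
          Finset.sum_ite_eq' (E.filter (fun e => e.1 = j)) (b, c) (fun _ => 1)]
        simp [Finset.mem_filter, hbc]
      rw [h1, h2]
      have hj := hw j
      split_ifs at hj ⊢ <;> omega

private lemma circulation_exists {m : ℕ} (E : Finset (Fin m × Fin m))
    (hwr : WeaklyReversible E) :
    ∃ w : Fin m × Fin m → ℕ, (∀ e ∈ E, 0 < w e) ∧
      ∀ j, (∑ e ∈ E.filter (fun e => e.2 = j), w e)
        = ∑ e ∈ E.filter (fun e => e.1 = j), w e := by
  choose g hg using fun e : {e // e ∈ E} =>
    flow_exists E (hwr _ _ (Relation.ReflTransGen.single (Or.inr e.2)))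
  refine ⟨fun e => ∑ e' ∈ E.attach, (g e' e + if e = (e' : Fin m × Fin m) then 1 else 0), ?_, ?_⟩
  · intro e he
    have h1 : 0 < g ⟨e, he⟩ e + if e = ((⟨e, he⟩ : {e // e ∈ E}) : Fin m × Fin m) then 1 else 0 := by
      simp
    exact lt_of_lt_of_le h1 (Finset.single_le_sum
      (f := fun e' : {e // e ∈ E} => g e' e + if e = (e' : Fin m × Fin m) then 1 else 0)
      (fun _ _ => Nat.zero_le _) (Finset.mem_attach _ ⟨e, he⟩))
  · intro j
    have key : ∀ F : Finset (Fin m × Fin m),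
        (∑ e ∈ F, ∑ e' ∈ E.attach, (g e' e + if e = (e' : Fin m × Fin m) then 1 else 0))
          = ∑ e' ∈ E.attach, ((∑ e ∈ F, g e' e)
              + if (e' : Fin m × Fin m) ∈ F then 1 else 0) := by
      intro F
      rw [Finset.sum_comm]
      refine Finset.sum_congr rfl fun e' _ => ?_
      rw [Finset.sum_add_distrib, Finset.sum_ite_eq' F ((e' : Fin m × Fin m)) (fun _ => 1)]
    rw [key, key]
    refine Finset.sum_congr rfl fun e' _ => ?_
    simp only [Finset.mem_filter, e'.2, true_and]
    exact hg e' j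

private lemma lap_mulVec {m : ℕ} (E : Finset (Fin m × Fin m)) (k : Fin m × Fin m → ℝ)
    (y : Fin m → ℝ) (i' : Fin m) :
    (laplacian E k).mulVec y i'
      = (∑ e ∈ E.filter (fun e => e.2 = i'), k e * y e.1)
        - (∑ e ∈ E.filter (fun e => e.1 = i'), k e) * y i' := by
  have h0 : (laplacian E k).mulVec y i' = ∑ i, laplacian E k i' i * y i := rfl
  rw [h0]
  simp only [laplacian, sub_mul, ite_mul, zero_mul]
  rw [Finset.sum_sub_distrib]
  congr 1
  · rw [← Finset.sum_filter]
    refine Finset.sum_bij' (fun i _ => (i, i')) (fun e _ => e.1) ?_ ?_ ?_ ?_ ?_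
    · intro a ha
      simp only [Finset.mem_filter, Finset.mem_univ, true_and] at ha
      simp [Finset.mem_filter, ha]
    · intro e he
      simp only [Finset.mem_filter] at he
      simp only [Finset.mem_filter, Finset.mem_univ, true_and]
      rw [← he.2]
      exact he.1
    · intro a _; rfl
    · intro e he
      obtain ⟨_, h2⟩ := Finset.mem_filter.mp he
      exact Prod.ext rfl h2.symm
    · intro a _; rfl
  · rw [Finset.sum_ite_eq]
    simp

end Aux
/-- if there are nonzero sign-compatible vectors `u ∈ S̃^⊥` and `v ∈ S`, then
there are rate constants and a complex-balanced equilibrium `x*` with `J(x*) v = 0`; in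
particular `J(x*)` is not stable on `S`. -/
theorem stmt10 {n m : ℕ} (E : Finset (Fin m × Fin m)) (hE : ∀ e ∈ E, e.1 ≠ e.2)
    (hwr : WeaklyReversible E) (Y Yt : Matrix (Fin n) (Fin m) ℝ)
    (u v : Fin n → ℝ) (hu : u ≠ 0) (hv : v ≠ 0)
    (huperp : ∀ w ∈ stoichSubspace Yt E, u ⬝ᵥ w = 0)
    (hvS : v ∈ stoichSubspace Y E)
    (hsign : ∀ i, Real.sign (u i) = Real.sign (v i)) :
    ∃ (k : Fin m × Fin m → ℝ) (x : Fin n → ℝ),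
      (∀ e ∈ E, 0 < k e) ∧ (∀ i, 0 < x i) ∧
      (laplacian E k).mulVec (powVec x Yt) = 0 ∧
      (jacobianMat E k Y Yt x).mulVec v = 0 ∧
      ¬ IsStableOn (jacobianMat E k Y Yt x) (stoichSubspace Y E) := by
  classical
  obtain ⟨wtot, hwpos, hbal⟩ := circulation_exists E hwr
  set x : Fin n → ℝ := fun i => if u i = 0 then 1 else v i / u i with hxdef
  have hvz : ∀ i, u i = 0 → v i = 0 := by
    intro i hi
    have := hsign i
    rw [hi, Real.sign_zero] at this
    exact Real.sign_eq_zero_iff.mp this.symm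
  have hx : ∀ i, 0 < x i := by
    intro i
    by_cases hi : u i = 0
    · simp [hxdef, hi]
    · have hsi := hsign i
      have hxi : x i = v i / u i := by simp [hxdef, hi]
      rw [hxi]
      rcases lt_or_gt_of_ne hi with hneg | hpos
      · have hv' : v i < 0 := by
          rcases lt_trichotomy (v i) 0 with h | h | h
          · exact h
          · rw [Real.sign_of_neg hneg, h, Real.sign_zero] at hsi; norm_num at hsi
          · rw [Real.sign_of_neg hneg, Real.sign_of_pos h] at hsi; norm_num at hsi
        exact div_pos_of_neg_of_neg hv' hneg
      · have hv' : 0 < v i := by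
          rcases lt_trichotomy (v i) 0 with h | h | h
          · rw [Real.sign_of_pos hpos, Real.sign_of_neg h] at hsi; norm_num at hsi
          · rw [Real.sign_of_pos hpos, h, Real.sign_zero] at hsi; norm_num at hsi
          · exact h
        exact div_pos hv' hpos
  have hxv : ∀ i, v i * (x i)⁻¹ = u i := by
    intro i
    by_cases hi : u i = 0
    · simp [hvz i hi, hi]
    · have hvi : v i ≠ 0 := by
        intro h
        apply hi
        have := hsign i
        rw [h, Real.sign_zero] at this
        exact Real.sign_eq_zero_iff.mp this
      have hxi : x i = v i / u i := by simp [hxdef, hi]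
      rw [hxi]
      field_simp
  set c : Fin m → ℝ := powVec x Yt with hcdef
  have hc : ∀ j, 0 < c j :=
    fun j => Finset.prod_pos fun i _ => Real.rpow_pos_of_pos (hx i) _
  set k : Fin m × Fin m → ℝ := fun e => (wtot e : ℝ) / c e.1 with hkdef
  have hkc : ∀ e, k e * c e.1 = (wtot e : ℝ) := by
    intro e
    rw [hkdef]
    exact div_mul_cancel₀ _ (hc e.1).ne'
  have hb : ∀ i', (∑ e ∈ E.filter (fun e => e.2 = i'), (wtot e : ℝ))
      = ∑ e ∈ E.filter (fun e => e.1 = i'), (wtot e : ℝ) := by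
    intro i'; exact_mod_cast hbal i'
  have heq : (laplacian E k).mulVec c = 0 := by
    funext i'
    rw [lap_mulVec, Pi.zero_apply]
    have e1 : ∑ e ∈ E.filter (fun e => e.2 = i'), k e * c e.1
        = ∑ e ∈ E.filter (fun e => e.2 = i'), (wtot e : ℝ) :=
      Finset.sum_congr rfl fun e _ => hkc e
    have e2 : (∑ e ∈ E.filter (fun e => e.1 = i'), k e) * c i'
        = ∑ e ∈ E.filter (fun e => e.1 = i'), (wtot e : ℝ) := by
      rw [Finset.sum_mul]
      refine Finset.sum_congr rfl fun e he => ?_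
      rw [← (Finset.mem_filter.mp he).2]
      exact hkc e
    rw [e1, e2, hb, sub_self]
  set μ : Fin m → ℝ := Ytᵀ.mulVec u with hmudef
  have hμ : ∀ e ∈ E, μ e.1 = μ e.2 := by
    intro e he
    have hmem : (Yt * incidence E).mulVec (Pi.single ⟨e, he⟩ 1) ∈ stoichSubspace Yt E :=
      ⟨Pi.single ⟨e, he⟩ 1, by rw [Matrix.mulVecLin_apply]⟩
    have h0 := huperp _ hmem
    rw [← Matrix.mulVec_mulVec, Matrix.dotProduct_mulVec, ← Matrix.mulVec_transpose,
      ← hmudef] at h0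
    have hcol : (incidence E).mulVec (Pi.single ⟨e, he⟩ 1)
        = fun i => incidence E i ⟨e, he⟩ := by
      funext i
      simp [Matrix.mulVec, dotProduct, Pi.single_apply, mul_ite]
    rw [hcol] at h0
    have h1 : μ ⬝ᵥ (fun i => incidence E i ⟨e, he⟩) = μ e.2 - μ e.1 := by
      simp only [dotProduct, incidence, mul_sub, mul_ite, mul_one, mul_zero,
        Finset.sum_sub_distrib]
      rw [Finset.sum_ite_eq Finset.univ e.2 (fun i => μ i),
        Finset.sum_ite_eq Finset.univ e.1 (fun i => μ i)]
      simp
    rw [h1] at h0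
    linarith
  have hJv : (jacobianMat E k Y Yt x).mulVec v = 0 := by
    show (Y * laplacian E k * Matrix.diagonal (powVec x Yt) * Ytᵀ
      * Matrix.diagonal (fun i => (x i)⁻¹)).mulVec v = 0
    rw [← hcdef]
    simp only [← Matrix.mulVec_mulVec]
    have s1 : (Matrix.diagonal fun i => (x i)⁻¹).mulVec v = u := by
      funext i
      rw [Matrix.mulVec_diagonal, mul_comm]
      exact hxv i
    rw [s1, ← hmudef]
    have s3 : (laplacian E k).mulVec ((Matrix.diagonal c).mulVec μ) = 0 := by
      funext i'
      rw [lap_mulVec, Pi.zero_apply]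
      simp only [Matrix.mulVec_diagonal]
      have e1 : ∑ e ∈ E.filter (fun e => e.2 = i'), k e * (c e.1 * μ e.1)
          = (∑ e ∈ E.filter (fun e => e.2 = i'), (wtot e : ℝ)) * μ i' := by
        rw [Finset.sum_mul]
        refine Finset.sum_congr rfl fun e he => ?_
        obtain ⟨heE, he2⟩ := Finset.mem_filter.mp he
        rw [← mul_assoc, hkc, hμ e heE, he2]
      have e2 : (∑ e ∈ E.filter (fun e => e.1 = i'), k e) * (c i' * μ i')
          = (∑ e ∈ E.filter (fun e => e.1 = i'), (wtot e : ℝ)) * μ i' := by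
        rw [Finset.sum_mul, Finset.sum_mul]
        refine Finset.sum_congr rfl fun e he => ?_
        obtain ⟨_, he1⟩ := Finset.mem_filter.mp he
        rw [← he1, ← mul_assoc, hkc]
      rw [e1, e2, hb, sub_self]
    rw [s3, Matrix.mulVec_zero]
  refine ⟨k, x, ?_, hx, heq, hJv, ?_⟩
  · intro e he
    rw [hkdef]
    exact div_pos (by exact_mod_cast hwpos e he) (hc e.1)
  · rintro ⟨hrange, hstab⟩
    have hvne : (⟨v, hvS⟩ : stoichSubspace Y E) ≠ 0 := by
      intro hh
      exact hv (by simpa using congrArg Subtype.val hh)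
    have hT : restrictedMap (jacobianMat E k Y Yt x) (stoichSubspace Y E) hrange ⟨v, hvS⟩ = 0 := by
      apply Subtype.ext
      show (jacobianMat E k Y Yt x).mulVecLin v = _
      simpa [Matrix.mulVecLin_apply] using hJv
    set T := restrictedMap (jacobianMat E k Y Yt x) (stoichSubspace Y E) hrange with hTdef
    have hev : Module.End.HasEigenvalue T 0 :=
      Module.End.hasEigenvalue_of_hasEigenvector
        ⟨Module.End.mem_eigenspace_iff.mpr (by rw [hT]; simp), hvne⟩
    have hroot : T.charpoly.IsRoot 0 :=
      (Module.End.hasEigenvalue_iff_isRoot.mp hev).dvd (LinearMap.minpoly_dvd_charpoly T)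
    have hroot2 : ((T.charpoly).map (algebraMap ℝ ℂ)).IsRoot 0 := by
      simp only [Polynomial.IsRoot, ← Polynomial.coeff_zero_eq_eval_zero,
        Polynomial.coeff_map] at hroot ⊢
      rw [hroot, map_zero]
    have hfin := hstab 0 hroot2
    simp at hfin
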